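/- In the setting of the two preceding one-dimensional lemmas, with φ*(1) normalized so that ∑_{y=1}^L φ*(y) = L, one has φ*(1) δ_1 ψ₀(1) ≤ 1/(8L). -/

import Mathlib

open Finset

set_option maxHeartbeats 1000000 in
theorem stmt_4 (L : ℕ) (hL : 1 ≤ L) (b : ℕ → ℝ)
    (hb : ∀ j, j ≤ L + 1 → |b j| < 1/2)
    (hb1 : b 1 = - b 0)
    (φ ψ : ℕ → ℝ)
    (hφeq : ∀ x, 1 ≤ x → x ≤ L →
      φ x - (1/2) * (φ (x+1) + φ (x-1)) - b (x-1) * φ (x-1) + b (x+1) * φ (x+1) = 0)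
    (hφbc0 : φ 0 = φ 1) (hφbcL : φ (L+1) = φ L)
    (hφnorm : ∑ y ∈ Icc 1 L, φ y = L)
    (hψeq : ∀ x, 1 ≤ x → x ≤ L →
      ψ x - (1/2) * (ψ (x+1) + ψ (x-1)) - b x * (ψ (x+1) - ψ (x-1)) = 0)
    (hψbc0 : ψ 0 = - ψ 1) (hψbcL : ψ (L+1) = 1 - ψ L) :
    φ 1 * (1/2 - b 1) * ψ 1 ≤ 1 / (8 * L) := by
  set d : ℕ → ℝ := fun j => 1/2 - b j with hd
  set e : ℕ → ℝ := fun j => 1/2 + b j with he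
  show φ 1 * d 1 * ψ 1 ≤ 1 / (8 * L)
  clear_value d e
  have hdpos : ∀ j, j ≤ L + 1 → 0 < d j := by
    intro j hj
    have := abs_lt.mp (hb j hj)
    simp only [hd]; linarith [this.2]
  have hepos : ∀ j, j ≤ L + 1 → 0 < e j := by
    intro j hj
    have := abs_lt.mp (hb j hj)
    simp only [he]; linarith [this.1]
  have hde1 : ∀ j, d j + e j = 1 := by intro j; simp only [hd, he]; ring
  have hde4 : ∀ j, d j * e j ≤ 1/4 := by
    intro j; simp only [hd, he]; nlinarith [sq_nonneg (b j)]
  -- step relations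
  have hφstep : ∀ x, x ≤ L → e x * φ x = d (x+1) * φ (x+1) := by
    intro x
    induction x with
    | zero => intro _; simp only [hd, he, hφbc0, hb1]; ring
    | succ n ih =>
      intro hn
      have h1 := ih (by omega)
      have h2 := hφeq (n+1) (by omega) hn
      simp only [Nat.add_sub_cancel] at h2
      simp only [hd, he] at h1 ⊢
      linear_combination h1 + h2
  have hψstep : ∀ x, x < L → e (x+1) * (ψ (x+2) - ψ (x+1)) = d (x+1) * (ψ (x+1) - ψ x) := by
    intro x hx
    have h2 := hψeq (x+1) (by omega) (by omega)
    simp only [Nat.add_sub_cancel] at h2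
    simp only [hd, he]
    linear_combination -h2
  -- closed forms
  have hφprod : ∀ r, 1 ≤ r → r ≤ L →
      φ r * ∏ j ∈ Ico 2 (r+1), d j = φ 1 * ∏ j ∈ Ico 1 r, e j := by
    intro r hr
    induction r, hr using Nat.le_induction with
    | base => intro _; simp
    | succ n hn ih =>
      intro hnL
      have h1 := ih (by omega)
      have h2 := hφstep n (by omega)
      rw [Finset.prod_Ico_succ_top (by omega : 2 ≤ n+1),
          Finset.prod_Ico_succ_top (by omega : 1 ≤ n)]
      linear_combination e n * h1 - (∏ j ∈ Ico 2 (n+1), d j) * h2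
  have hψprod : ∀ r, r ≤ L →
      (ψ (r+1) - ψ r) * ∏ j ∈ Ico 1 (r+1), e j = 2 * ψ 1 * ∏ j ∈ Ico 1 (r+1), d j := by
    intro r
    induction r with
    | zero => intro _; simp [hψbc0]; ring
    | succ n ih =>
      intro hn
      have h1 := ih (by omega)
      have h2 := hψstep n (by omega)
      rw [Finset.prod_Ico_succ_top (by omega : 1 ≤ n+1),
          Finset.prod_Ico_succ_top (by omega : 1 ≤ n+1)]
      linear_combination (∏ j ∈ Ico 1 (n+1), e j) * h2 + d (n+1) * h1
  -- telescoping identity for ψ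
  have htele : ∑ r ∈ range L, (ψ (r+2) - ψ r) = 1 := by
    have h := Finset.sum_range_sub (fun i => ψ (i+1) + ψ i) L
    have h2 : ∑ r ∈ range L, (ψ (r+2) - ψ r)
        = ∑ r ∈ range L, ((fun i => ψ (i+1) + ψ i) (r+1) - (fun i => ψ (i+1) + ψ i) r) := by
      apply Finset.sum_congr rfl
      intro x _
      show ψ (x+2) - ψ x = (ψ (x+1+1) + ψ (x+1)) - (ψ (x+1) + ψ x)
      ring
    rw [h2, h]
    show ψ (L+1) + ψ L - (ψ 1 + ψ 0) = 1
    rw [hψbcL, hψbc0]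
    ring
  -- definitions of the sums
  set A : ℕ → ℝ := fun r => (∏ j ∈ Ico 1 (r+1), e j) * ∏ j ∈ Ico (r+2) (L+1), d j with hA
  set B : ℕ → ℝ := fun r => (∏ j ∈ Ico 1 (r+1), d j) * ∏ j ∈ Ico (r+2) (L+1), e j with hB
  set Sφ : ℝ := ∑ r ∈ range L, A r with hSφ
  set Sψ : ℝ := ∑ r ∈ range L, B r with hSψ
  set P : ℝ := ∏ j ∈ Ico 1 (L+1), (d j * e j) with hP
  clear_value A B Sφ Sψ P
  -- product splitting helper
  have hsplit : ∀ (f : ℕ → ℝ) r, r < L →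
      (∏ j ∈ Ico 1 (r+1), f j) * (f (r+1) * ∏ j ∈ Ico (r+2) (L+1), f j)
        = ∏ j ∈ Ico 1 (L+1), f j := by
    intro f r hr
    have t1 : f (r+1) * ∏ j ∈ Ico (r+2) (L+1), f j
        = ∏ j ∈ Ico (r+1) (L+1), f j := by
      have := Finset.prod_Ico_consecutive f (by omega : r+1 ≤ r+2) (by omega : r+2 ≤ L+1)
      rw [← this, Nat.Ico_succ_singleton, Finset.prod_singleton]
    rw [t1]
    exact Finset.prod_Ico_consecutive f (by omega) (by omega)
  -- φ normalization
  have hφA : ∀ r, r < L → φ (r+1) * ∏ j ∈ Ico 1 (L+1), d j = φ 1 * d 1 * A r := by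
    intro r hr
    have hc := hφprod (r+1) (by omega) (by omega)
    have hs := (hsplit d r hr).symm
    have hs2 : ∏ j ∈ Ico 1 (r+2), d j = d 1 * ∏ j ∈ Ico 2 (r+2), d j := by
      have := Finset.prod_Ico_consecutive d (by omega : 1 ≤ 2) (by omega : 2 ≤ r+2)
      rw [← this, Nat.Ico_succ_singleton, Finset.prod_singleton]
    have hs3 : (∏ j ∈ Ico 1 (r+2), d j) * ∏ j ∈ Ico (r+2) (L+1), d j
        = ∏ j ∈ Ico 1 (L+1), d j :=
      Finset.prod_Ico_consecutive d (by omega) (by omega)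
    simp only [hA]
    linear_combination (∏ j ∈ Ico (r+2) (L+1), d j) * d 1 * hc
      - φ (r+1) * hs3 + φ (r+1) * (∏ j ∈ Ico (r+2) (L+1), d j) * hs2
  have hφS : φ 1 * d 1 * Sφ = L * ∏ j ∈ Ico 1 (L+1), d j := by
    have hsum : (L : ℝ) = ∑ r ∈ range L, φ (r+1) := by
      rw [← hφnorm, ← Finset.Ico_add_one_right_eq_Icc, Finset.sum_Ico_eq_sum_range]
      refine Finset.sum_congr (by norm_num) ?_
      intro x _
      rw [Nat.add_comm]
    rw [hSφ, Finset.mul_sum]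
    rw [Finset.sum_congr rfl (fun r hr => (hφA r (Finset.mem_range.mp hr)).symm)]
    rw [← Finset.sum_mul, ← hsum]
  -- ψ normalization
  have hψB : ∀ r, r < L →
      (ψ (r+2) - ψ r) * ∏ j ∈ Ico 1 (L+1), e j = 2 * ψ 1 * B r := by
    intro r hr
    have h1 := hψprod r (by omega)
    have h2 := hψprod (r+1) hr
    have s2 : ∏ j ∈ Ico 1 (r+2), e j = (∏ j ∈ Ico 1 (r+1), e j) * e (r+1) :=
      Finset.prod_Ico_succ_top (by omega) e
    have s3 : ∏ j ∈ Ico 1 (r+2), d j = (∏ j ∈ Ico 1 (r+1), d j) * d (r+1) :=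
      Finset.prod_Ico_succ_top (by omega) d
    rw [s2, s3] at h2
    have s1 := (hsplit e r hr).symm
    have s4 := hde1 (r+1)
    rw [s1]
    simp only [hB]
    linear_combination (∏ j ∈ Ico (r+2) (L+1), e j) * h2
      + e (r+1) * (∏ j ∈ Ico (r+2) (L+1), e j) * h1
      + 2 * ψ 1 * (∏ j ∈ Ico 1 (r+1), d j) * (∏ j ∈ Ico (r+2) (L+1), e j) * s4
  have hψS : 2 * ψ 1 * Sψ = ∏ j ∈ Ico 1 (L+1), e j := by
    rw [hSψ, Finset.mul_sum]
    rw [Finset.sum_congr rfl (fun r hr => (hψB r (Finset.mem_range.mp hr)).symm)]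
    rw [← Finset.sum_mul, htele, one_mul]
  -- positivity
  have hdmem : ∀ j ∈ Ico 1 (L+1), 0 < d j := by
    intro j hj
    exact hdpos j (by have := Finset.mem_Ico.mp hj; omega)
  have hemem : ∀ j ∈ Ico 1 (L+1), 0 < e j := by
    intro j hj
    exact hepos j (by have := Finset.mem_Ico.mp hj; omega)
  have hPpos : 0 < P := by
    rw [hP]
    exact Finset.prod_pos (fun j hj => mul_pos (hdmem j hj) (hemem j hj))
  have hApos : ∀ r, r < L → 0 < A r := by
    intro r hr
    simp only [hA]
    apply mul_pos
    · exact Finset.prod_pos (fun j hj => hepos j (by have := Finset.mem_Ico.mp hj; omega))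
    · exact Finset.prod_pos (fun j hj => hdpos j (by have := Finset.mem_Ico.mp hj; omega))
  have hBpos : ∀ r, r < L → 0 < B r := by
    intro r hr
    simp only [hB]
    apply mul_pos
    · exact Finset.prod_pos (fun j hj => hdpos j (by have := Finset.mem_Ico.mp hj; omega))
    · exact Finset.prod_pos (fun j hj => hepos j (by have := Finset.mem_Ico.mp hj; omega))
  have hSφpos : 0 < Sφ := by
    rw [hSφ]
    apply Finset.sum_pos (fun r hr => hApos r (Finset.mem_range.mp hr))
    exact Finset.nonempty_range_iff.mpr (by omega)
  have hSψpos : 0 < Sψ := by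
    rw [hSψ]
    apply Finset.sum_pos (fun r hr => hBpos r (Finset.mem_range.mp hr))
    exact Finset.nonempty_range_iff.mpr (by omega)
  -- A r * B r * (d(r+1) e(r+1)) = P
  have hABP : ∀ r, r < L → A r * B r * (d (r+1) * e (r+1)) = P := by
    intro r hr
    have h1 := hsplit (fun j => d j * e j) r hr
    have hd1 : ∏ j ∈ Ico 1 (r+1), (d j * e j)
        = (∏ j ∈ Ico 1 (r+1), d j) * ∏ j ∈ Ico 1 (r+1), e j :=
      Finset.prod_mul_distrib
    have hd2 : ∏ j ∈ Ico (r+2) (L+1), (d j * e j)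
        = (∏ j ∈ Ico (r+2) (L+1), d j) * ∏ j ∈ Ico (r+2) (L+1), e j :=
      Finset.prod_mul_distrib
    rw [hd1, hd2] at h1
    simp only [hA, hB, hP]
    linear_combination h1
  -- Cauchy-Schwarz
  have hCS : (∑ r ∈ range L, Real.sqrt (A r) * Real.sqrt (B r)) ^ 2 ≤ Sφ * Sψ := by
    have h := Finset.sum_mul_sq_le_sq_mul_sq (range L)
      (fun r => Real.sqrt (A r)) (fun r => Real.sqrt (B r))
    have hA2 : ∑ r ∈ range L, Real.sqrt (A r) ^ 2 = Sφ := by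
      rw [hSφ]
      apply Finset.sum_congr rfl
      intro r hr
      exact Real.sq_sqrt (hApos r (Finset.mem_range.mp hr)).le
    have hB2 : ∑ r ∈ range L, Real.sqrt (B r) ^ 2 = Sψ := by
      rw [hSψ]
      apply Finset.sum_congr rfl
      intro r hr
      exact Real.sq_sqrt (hBpos r (Finset.mem_range.mp hr)).le
    rw [hA2, hB2] at h
    exact h
  -- lower bound for each term
  have hterm : ∀ r ∈ range L, 2 * Real.sqrt P ≤ Real.sqrt (A r) * Real.sqrt (B r) := by
    intro r hr
    have hrL := Finset.mem_range.mp hr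
    rw [← Real.sqrt_mul (hApos r hrL).le]
    have h4 : 4 * P ≤ A r * B r := by
      have h1 := hABP r hrL
      have h2 := hde4 (r+1)
      have h3 := mul_pos (hApos r hrL) (hBpos r hrL)
      have h5 : A r * B r * (d (r+1) * e (r+1)) ≤ A r * B r * (1/4) :=
        mul_le_mul_of_nonneg_left h2 h3.le
      nlinarith [h1, h5]
    calc 2 * Real.sqrt P = Real.sqrt (4 * P) := by
          rw [show (4:ℝ) = 2^2 by norm_num, Real.sqrt_mul (by positivity),
            Real.sqrt_sq (by norm_num : (0:ℝ) ≤ 2)]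
      _ ≤ Real.sqrt (A r * B r) := Real.sqrt_le_sqrt h4
  have hsumlb : (L : ℝ) * (2 * Real.sqrt P)
      ≤ ∑ r ∈ range L, Real.sqrt (A r) * Real.sqrt (B r) := by
    have := Finset.card_nsmul_le_sum (range L)
      (fun r => Real.sqrt (A r) * Real.sqrt (B r)) (2 * Real.sqrt P) hterm
    simpa [nsmul_eq_mul] using this
  have hfinal : 4 * (L:ℝ)^2 * P ≤ Sφ * Sψ := by
    have h0 : (0:ℝ) ≤ (L:ℝ) * (2 * Real.sqrt P) := by positivity
    have hsq : ((L:ℝ) * (2 * Real.sqrt P))^2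
        ≤ (∑ r ∈ range L, Real.sqrt (A r) * Real.sqrt (B r))^2 :=
      pow_le_pow_left₀ h0 hsumlb 2
    have hPs := Real.sq_sqrt hPpos.le
    nlinarith [hCS]
  -- combine
  have hPde : (∏ j ∈ Ico 1 (L+1), d j) * (∏ j ∈ Ico 1 (L+1), e j) = P := by
    rw [hP]; exact Finset.prod_mul_distrib.symm
  have key : φ 1 * d 1 * ψ 1 * (2 * Sφ * Sψ) = L * P := by
    linear_combination (2 * ψ 1 * Sψ) * hφS
      + ((L:ℝ) * ∏ j ∈ Ico 1 (L+1), d j) * hψS + (L:ℝ) * hPde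
  have hSS : (0:ℝ) < 2 * Sφ * Sψ := by positivity
  have hLpos : (0:ℝ) < (L:ℝ) := by exact_mod_cast hL
  rw [show φ 1 * d 1 * ψ 1 = (L:ℝ) * P / (2 * Sφ * Sψ) from by
    rw [eq_div_iff hSS.ne']; exact key]
  rw [div_le_div_iff₀ hSS (by positivity)]
  nlinarith [hfinal, hPpos, hLpos]
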